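/- Let b_0(x) = (0,1,0), b_1(x) = (sin φ, 2cos φ/tan 2χ, −cos φ/sin 2χ), b_2(x) = (cos φ, −2 sin φ/tan 2χ, sin φ/sin 2χ) be vector fields in the variables x = (χ, φ, ψ), and let A_i = Σ_j b_i^j ∂_j be the associated first-order differential operators. Then the commutators satisfy [A_0, A_1] = A_2, [A_0, A_2] = −A_1 and [A_1, A_2] = 4A_0, and the determinant of the 3×3 matrix with rows b_0, b_1, b_2 equals −1/sin(2χ). -/

import Mathlib

open Real

noncomputable section

/-- The first-order differential operator `A = Σ_j b^j ∂_j` associated with a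
vector field `b` on `ℝ³`, applied to a function `f` at a point `x`. -/
def vecOp (b : (Fin 3 → ℝ) → (Fin 3 → ℝ)) (f : (Fin 3 → ℝ) → ℝ) (x : Fin 3 → ℝ) : ℝ :=
  fderiv ℝ f x (b x)

/-- The vector field `b₀(x) = (0,1,0)` in the variables `x = (χ, φ, ψ)`. -/
def bf0 : (Fin 3 → ℝ) → (Fin 3 → ℝ) := fun _ => ![0, 1, 0]

/-- The vector field `b₁(x) = (sin φ, 2 cos φ / tan 2χ, − cos φ / sin 2χ)`
(with `1/tan 2χ` written as `cos 2χ / sin 2χ`). -/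
def bf1 : (Fin 3 → ℝ) → (Fin 3 → ℝ) := fun x =>
  ![Real.sin (x 1),
    2 * Real.cos (x 1) * (Real.cos (2 * x 0) / Real.sin (2 * x 0)),
    -(Real.cos (x 1)) / Real.sin (2 * x 0)]

/-- The vector field `b₂(x) = (cos φ, −2 sin φ / tan 2χ, sin φ / sin 2χ)`. -/
def bf2 : (Fin 3 → ℝ) → (Fin 3 → ℝ) := fun x =>
  ![Real.cos (x 1),
    -(2 * Real.sin (x 1)) * (Real.cos (2 * x 0) / Real.sin (2 * x 0)),
    Real.sin (x 1) / Real.sin (2 * x 0)]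

/- ### Auxiliary material -/

/-- General commutator formula: for a `C²` function `f` and differentiable vector
fields `b, b'`, `[A, A'] f (x) = df_x (Db'(b) - Db(b'))`. -/
lemma vecOp_comm (f : (Fin 3 → ℝ) → ℝ) (hf : ContDiff ℝ 2 f)
    (b b' : (Fin 3 → ℝ) → (Fin 3 → ℝ)) (x : Fin 3 → ℝ)
    (Lb Lb' : (Fin 3 → ℝ) →L[ℝ] (Fin 3 → ℝ))
    (hb : HasFDerivAt b Lb x) (hb' : HasFDerivAt b' Lb' x) :
    vecOp b (vecOp b' f) x - vecOp b' (vecOp b f) x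
      = fderiv ℝ f x (Lb' (b x) - Lb (b' x)) := by
  have hF : ContDiff ℝ 1 (fderiv ℝ f) := hf.fderiv_right (by norm_num)
  have hFd : DifferentiableAt ℝ (fderiv ℝ f) x := (hF.differentiable (by norm_num)).differentiableAt
  have hdf : ∀ y, HasFDerivAt f (fderiv ℝ f y) y := fun y =>
    ((hf.differentiable (by norm_num)) y).hasFDerivAt
  have hsymm := second_derivative_symmetric (f := f) (f' := fderiv ℝ f)
    (f'' := fderiv ℝ (fderiv ℝ f) x) hdf hFd.hasFDerivAt (b x) (b' x)
  have key : ∀ (c : (Fin 3 → ℝ) → (Fin 3 → ℝ)) (Lc : (Fin 3 → ℝ) →L[ℝ] (Fin 3 → ℝ)),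
      HasFDerivAt c Lc x → ∀ v : Fin 3 → ℝ,
      fderiv ℝ (fun y => (fderiv ℝ f y) (c y)) x v
        = fderiv ℝ f x (Lc v) + (fderiv ℝ (fderiv ℝ f) x v) (c x) := by
    intro c Lc hc v
    rw [fderiv_clm_apply hFd hc.differentiableAt]
    simp [hc.fderiv]
  unfold vecOp
  rw [key b' Lb' hb' (b x), key b Lb hb (b' x), hsymm, map_sub]
  ring

/-- The continuous linear map given by a 3×2 "partial Jacobian"
(columns: `∂χ`, `∂φ`; none of the fields depends on `ψ`). -/
def dmat (m : Fin 3 → Fin 2 → ℝ) : (Fin 3 → ℝ) →L[ℝ] (Fin 3 → ℝ) :=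
  ContinuousLinearMap.pi (fun i =>
    m i 0 • ContinuousLinearMap.proj 0 + m i 1 • ContinuousLinearMap.proj 1)

@[simp] lemma dmat_apply (m : Fin 3 → Fin 2 → ℝ) (v : Fin 3 → ℝ) (i : Fin 3) :
    dmat m v i = m i 0 * v 0 + m i 1 * v 1 := by
  simp [dmat]

lemma hasDerivAt_sin2 (t : ℝ) : HasDerivAt (fun t => Real.sin (2*t)) (2 * Real.cos (2*t)) t := by
  have h : HasDerivAt (fun t : ℝ => 2*t) 2 t := by simpa using (hasDerivAt_id t).const_mul 2
  exact ((Real.hasDerivAt_sin (2*t)).comp t h).congr_deriv (by ring)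

lemma hasDerivAt_cos2 (t : ℝ) : HasDerivAt (fun t => Real.cos (2*t)) (-(2 * Real.sin (2*t))) t := by
  have h : HasDerivAt (fun t : ℝ => 2*t) 2 t := by simpa using (hasDerivAt_id t).const_mul 2
  exact ((Real.hasDerivAt_cos (2*t)).comp t h).congr_deriv (by ring)

section FieldDerivs

variable (x : Fin 3 → ℝ) (hs : Real.sin (2 * x 0) ≠ 0)

lemma hasF_bf1 (x : Fin 3 → ℝ) (hs : Real.sin (2 * x 0) ≠ 0) :
    HasFDerivAt bf1 (dmat
      ![![0, Real.cos (x 1)],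
        ![-4 * Real.cos (x 1) / Real.sin (2*x 0)^2,
          -2 * Real.sin (x 1) * Real.cos (2*x 0) / Real.sin (2*x 0)],
        ![2 * Real.cos (x 1) * Real.cos (2*x 0) / Real.sin (2*x 0)^2,
          Real.sin (x 1) / Real.sin (2*x 0)]]) x := by
  have h0 : HasFDerivAt (fun y : Fin 3 → ℝ => y 0)
      (ContinuousLinearMap.proj (R := ℝ) (φ := fun _ : Fin 3 => ℝ) 0) x :=
    (ContinuousLinearMap.proj (R := ℝ) (φ := fun _ : Fin 3 => ℝ) 0).hasFDerivAt
  have h1 : HasFDerivAt (fun y : Fin 3 → ℝ => y 1)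
      (ContinuousLinearMap.proj (R := ℝ) (φ := fun _ : Fin 3 => ℝ) 1) x :=
    (ContinuousLinearMap.proj (R := ℝ) (φ := fun _ : Fin 3 => ℝ) 1).hasFDerivAt
  have hsin1 : HasFDerivAt (fun y : Fin 3 → ℝ => Real.sin (y 1))
      (Real.cos (x 1) • ContinuousLinearMap.proj (R := ℝ) (φ := fun _ : Fin 3 => ℝ) 1) x :=
    by have := (Real.hasDerivAt_sin (x 1)).comp_hasFDerivAt x h1; exact this
  have hcos1 : HasFDerivAt (fun y : Fin 3 → ℝ => Real.cos (y 1))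
      ((-Real.sin (x 1)) • ContinuousLinearMap.proj (R := ℝ) (φ := fun _ : Fin 3 => ℝ) 1) x :=
    by have := (Real.hasDerivAt_cos (x 1)).comp_hasFDerivAt x h1; exact this
  have hsin2 : HasFDerivAt (fun y : Fin 3 → ℝ => Real.sin (2 * y 0))
      ((2 * Real.cos (2 * x 0)) • ContinuousLinearMap.proj (R := ℝ) (φ := fun _ : Fin 3 => ℝ) 0) x :=
    by have := (hasDerivAt_sin2 (x 0)).comp_hasFDerivAt x h0; exact this
  have hcos2 : HasFDerivAt (fun y : Fin 3 → ℝ => Real.cos (2 * y 0))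
      ((-(2 * Real.sin (2 * x 0))) • ContinuousLinearMap.proj (R := ℝ) (φ := fun _ : Fin 3 => ℝ) 0) x :=
    by have := (hasDerivAt_cos2 (x 0)).comp_hasFDerivAt x h0; exact this
  have hinv : HasFDerivAt (fun y : Fin 3 → ℝ => (Real.sin (2 * y 0))⁻¹)
      ((-(Real.sin (2 * x 0) ^ 2)⁻¹) • ((2 * Real.cos (2 * x 0)) • ContinuousLinearMap.proj (R := ℝ) (φ := fun _ : Fin 3 => ℝ) 0)) x :=
    (hasDerivAt_inv hs).comp_hasFDerivAt x hsin2
  apply hasFDerivAt_pi'.2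
  intro i
  fin_cases i
  · show HasFDerivAt (fun y : Fin 3 → ℝ => Real.sin (y 1)) _ x
    refine hsin1.congr_fderiv ?_
    ext v
    simp
  · show HasFDerivAt (fun y : Fin 3 → ℝ =>
      2 * Real.cos (y 1) * (Real.cos (2 * y 0) / Real.sin (2 * y 0))) _ x
    simp only [div_eq_mul_inv]
    have := (hcos1.const_mul 2).mul (hcos2.mul hinv)
    refine this.congr_fderiv ?_
    ext v
    simp
    field_simp
    linear_combination (-4 * Real.cos (x 1) * v 0) * Real.sin_sq_add_cos_sq (2*x 0)
  · show HasFDerivAt (fun y : Fin 3 → ℝ =>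
      -(Real.cos (y 1)) / Real.sin (2 * y 0)) _ x
    simp only [div_eq_mul_inv]
    have := (hcos1.neg).mul hinv
    refine this.congr_fderiv ?_
    ext v
    simp
    field_simp

lemma hasF_bf2 (x : Fin 3 → ℝ) (hs : Real.sin (2 * x 0) ≠ 0) :
    HasFDerivAt bf2 (dmat
      ![![0, -Real.sin (x 1)],
        ![4 * Real.sin (x 1) / Real.sin (2*x 0)^2,
          -2 * Real.cos (x 1) * Real.cos (2*x 0) / Real.sin (2*x 0)],
        ![-2 * Real.sin (x 1) * Real.cos (2*x 0) / Real.sin (2*x 0)^2,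
          Real.cos (x 1) / Real.sin (2*x 0)]]) x := by
  have h0 : HasFDerivAt (fun y : Fin 3 → ℝ => y 0)
      (ContinuousLinearMap.proj (R := ℝ) (φ := fun _ : Fin 3 => ℝ) 0) x :=
    (ContinuousLinearMap.proj (R := ℝ) (φ := fun _ : Fin 3 => ℝ) 0).hasFDerivAt
  have h1 : HasFDerivAt (fun y : Fin 3 → ℝ => y 1)
      (ContinuousLinearMap.proj (R := ℝ) (φ := fun _ : Fin 3 => ℝ) 1) x :=
    (ContinuousLinearMap.proj (R := ℝ) (φ := fun _ : Fin 3 => ℝ) 1).hasFDerivAt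
  have hsin1 : HasFDerivAt (fun y : Fin 3 → ℝ => Real.sin (y 1))
      (Real.cos (x 1) • ContinuousLinearMap.proj (R := ℝ) (φ := fun _ : Fin 3 => ℝ) 1) x :=
    by have := (Real.hasDerivAt_sin (x 1)).comp_hasFDerivAt x h1; exact this
  have hcos1 : HasFDerivAt (fun y : Fin 3 → ℝ => Real.cos (y 1))
      ((-Real.sin (x 1)) • ContinuousLinearMap.proj (R := ℝ) (φ := fun _ : Fin 3 => ℝ) 1) x :=
    by have := (Real.hasDerivAt_cos (x 1)).comp_hasFDerivAt x h1; exact this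
  have hsin2 : HasFDerivAt (fun y : Fin 3 → ℝ => Real.sin (2 * y 0))
      ((2 * Real.cos (2 * x 0)) • ContinuousLinearMap.proj (R := ℝ) (φ := fun _ : Fin 3 => ℝ) 0) x :=
    by have := (hasDerivAt_sin2 (x 0)).comp_hasFDerivAt x h0; exact this
  have hcos2 : HasFDerivAt (fun y : Fin 3 → ℝ => Real.cos (2 * y 0))
      ((-(2 * Real.sin (2 * x 0))) • ContinuousLinearMap.proj (R := ℝ) (φ := fun _ : Fin 3 => ℝ) 0) x :=
    by have := (hasDerivAt_cos2 (x 0)).comp_hasFDerivAt x h0; exact this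
  have hinv : HasFDerivAt (fun y : Fin 3 → ℝ => (Real.sin (2 * y 0))⁻¹)
      ((-(Real.sin (2 * x 0) ^ 2)⁻¹) • ((2 * Real.cos (2 * x 0)) • ContinuousLinearMap.proj (R := ℝ) (φ := fun _ : Fin 3 => ℝ) 0)) x :=
    (hasDerivAt_inv hs).comp_hasFDerivAt x hsin2
  apply hasFDerivAt_pi'.2
  intro i
  fin_cases i
  · show HasFDerivAt (fun y : Fin 3 → ℝ => Real.cos (y 1)) _ x
    refine hcos1.congr_fderiv ?_
    ext v
    simp
  · show HasFDerivAt (fun y : Fin 3 → ℝ =>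
      -(2 * Real.sin (y 1)) * (Real.cos (2 * y 0) / Real.sin (2 * y 0))) _ x
    simp only [div_eq_mul_inv]
    have := ((hsin1.const_mul 2).neg).mul (hcos2.mul hinv)
    refine this.congr_fderiv ?_
    ext v
    simp
    field_simp
    linear_combination (4 * Real.sin (x 1) * v 0) * Real.sin_sq_add_cos_sq (2*x 0)
  · show HasFDerivAt (fun y : Fin 3 → ℝ =>
      Real.sin (y 1) / Real.sin (2 * y 0)) _ x
    simp only [div_eq_mul_inv]
    have := hsin1.mul hinv
    refine this.congr_fderiv ?_
    ext v
    simp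
    field_simp

end FieldDerivs

/-- The commutators of the operators `A_i` associated with `b₀, b₁, b₂` satisfy
`[A₀,A₁] = A₂`, `[A₀,A₂] = −A₁`, `[A₁,A₂] = 4A₀`, and
`det(b₀,b₁,b₂) = −1/sin 2χ`. -/
theorem commutators_and_det_of_control_fields :
    (∀ f : (Fin 3 → ℝ) → ℝ, ContDiff ℝ 2 f → ∀ x : Fin 3 → ℝ, x 0 ∈ Set.Ioo 0 (π / 2) →
      vecOp bf0 (vecOp bf1 f) x - vecOp bf1 (vecOp bf0 f) x = vecOp bf2 f x ∧
      vecOp bf0 (vecOp bf2 f) x - vecOp bf2 (vecOp bf0 f) x = -vecOp bf1 f x ∧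
      vecOp bf1 (vecOp bf2 f) x - vecOp bf2 (vecOp bf1 f) x = 4 * vecOp bf0 f x) ∧
    (∀ x : Fin 3 → ℝ, x 0 ∈ Set.Ioo 0 (π / 2) →
      Matrix.det (Matrix.of ![bf0 x, bf1 x, bf2 x]) = -1 / Real.sin (2 * x 0)) := by
  constructor
  · intro f hf x hx
    obtain ⟨hx0, hx1⟩ := hx
    have hsp : 0 < Real.sin (2 * x 0) :=
      Real.sin_pos_of_pos_of_lt_pi (by linarith) (by linarith [Real.pi_pos])
    have hs : Real.sin (2 * x 0) ≠ 0 := ne_of_gt hsp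
    have h1 := hasF_bf1 x hs
    have h2 := hasF_bf2 x hs
    have h0 : HasFDerivAt bf0 (0 : (Fin 3 → ℝ) →L[ℝ] (Fin 3 → ℝ)) x := hasFDerivAt_const _ _
    refine ⟨?_, ?_, ?_⟩
    · rw [vecOp_comm f hf bf0 bf1 x 0 _ h0 h1]
      unfold vecOp
      congr 1
      funext i
      fin_cases i <;>
        simp [bf0, bf1, bf2] <;> ring
    · rw [vecOp_comm f hf bf0 bf2 x 0 _ h0 h2,
        show -vecOp bf1 f x = fderiv ℝ f x (-(bf1 x)) from by rw [map_neg]; rfl]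
      congr 1
      funext i
      fin_cases i <;>
        simp [bf0, bf1, bf2] <;> ring
    · rw [vecOp_comm f hf bf1 bf2 x _ _ h1 h2,
        show (4:ℝ) * vecOp bf0 f x = fderiv ℝ f x ((4:ℝ) • bf0 x) from by
          rw [map_smul]; simp [vecOp]]
      congr 1
      funext i
      fin_cases i
      · simp [bf0, bf1, bf2]; ring
      · simp [bf0, bf1, bf2]
        field_simp
        linear_combination
          (4 * (1 - Real.cos (2*x 0)^2)) * Real.sin_sq_add_cos_sq (x 1) +
          (-4) * Real.sin_sq_add_cos_sq (2*x 0)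
      · simp [bf0, bf1, bf2]; ring
  · intro x hx
    obtain ⟨hx0, hx1⟩ := hx
    have hsp : 0 < Real.sin (2 * x 0) :=
      Real.sin_pos_of_pos_of_lt_pi (by linarith) (by linarith [Real.pi_pos])
    have hs : Real.sin (2 * x 0) ≠ 0 := ne_of_gt hsp
    simp [Matrix.det_fin_three, bf0, bf1, bf2]
    field_simp
    linear_combination (-1) * Real.sin_sq_add_cos_sq (x 1)

end
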